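/- Let E be a real inner product space, λ ∈ ℝ, and f : E → ℝ a λ-concave continuously differentiable function. Let α : [0, T) → E be an f-gradient curve with ∇f(α(t)) ≠ 0 for all t ∈ [0, T), and let s(t) = ∫₀ᵗ ‖∇f(α(u))‖ du be its arclength parameter (a strictly increasing function). Then the reparametrized composition is λ-concave in arclength: for any 0 ≤ t₀ < t₁ < t₂ < T, writing sᵢ = s(tᵢ) and h(sᵢ) = f(α(tᵢ)) − (λ/2)·sᵢ², one has h(s₁) ≥ ((s₂ − s₁)·h(s₀) + (s₁ − s₀)·h(s₂))/(s₂ − s₀). -/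

import Mathlib

open scoped RealInnerProductSpace
open Set MeasureTheory Filter Topology

set_option linter.unusedVariables false
set_option linter.unusedSectionVars false
set_option maxHeartbeats 1000000


lemma grad_upper_bound
    {E : Type*} [NormedAddCommGroup E] [InnerProductSpace ℝ E]
    (lam : ℝ) (f : E → ℝ) (g : E → E)
    (hconc : ConcaveOn ℝ Set.univ (fun x => f x - lam / 2 * ‖x‖ ^ 2))
    (hg : ∀ x, HasFDerivAt f (innerSL ℝ (g x)) x)
    (x y : E) : f y ≤ f x + ⟪g x, y - x⟫ + lam / 2 * ‖y - x‖ ^ 2 := by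
  set F : E → ℝ := fun x => f x - lam / 2 * ‖x‖ ^ 2 with hF
  have hdF : ∀ p : E, HasFDerivAt F (innerSL ℝ (g p) - lam • innerSL ℝ p) p := by
    intro p
    have h1 : HasFDerivAt (fun q : E => ‖q‖ ^ 2) (2 • innerSL ℝ p) p := by
      simpa using (hasFDerivAt_id p).norm_sq
    have h2 : HasFDerivAt (fun q : E => lam / 2 * ‖q‖ ^ 2)
        ((lam / 2) • (2 • innerSL ℝ p)) p := h1.const_smul (lam / 2)
    have := (hg p).sub h2
    exact this.congr_fderiv (by ext v; simp [smul_smul]; ring)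
  -- restrict to the segment
  set c : ℝ → E := fun r => x + r • (y - x) with hc
  have hcc : ∀ r : ℝ, HasDerivAt c (y - x) r := fun r => by
    simpa [hc] using ((hasDerivAt_id r).smul_const (y - x)).const_add x
  have hu : ConcaveOn ℝ Set.univ (F ∘ c) := by
    have := hconc.comp_affineMap (AffineMap.lineMap x y : ℝ →ᵃ[ℝ] E)
    have hceq : (F ∘ (AffineMap.lineMap x y : ℝ →ᵃ[ℝ] E)) = F ∘ c := by
      funext r
      simp [hc, Function.comp, AffineMap.lineMap_apply]
      rw [add_comm x (r • (y - x))]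
    rw [hceq] at this
    simpa using this
  have hder : HasDerivAt (F ∘ c) ((innerSL ℝ (g x) - lam • innerSL ℝ x) (y - x)) 0 := by
    have := (hdF (c 0)).comp_hasDerivAt 0 (hcc 0)
    simpa [hc] using this
  have hslope := hu.slope_le_of_hasDerivAt (Set.mem_univ (0:ℝ)) (Set.mem_univ (1:ℝ))
    one_pos hder
  have hc1 : c 1 = y := by simp [hc]
  have hc0 : c 0 = x := by simp [hc]
  rw [slope_def_field] at hslope
  simp only [Function.comp, hc1, hc0] at hslope
  -- hslope : (F y - F x) / (1 - 0) ≤ ⟪g x, y - x⟫ - lam * ⟪x, y - x⟫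
  have hip : ⟪x, y - x⟫ = ⟪x, y⟫ - ‖x‖ ^ 2 := by
    rw [inner_sub_right, real_inner_self_eq_norm_sq]
  have hnorm : ‖y - x‖ ^ 2 = ‖y‖ ^ 2 - 2 * ⟪y, x⟫ + ‖x‖ ^ 2 := norm_sub_sq_real y x
  have hcomm : ⟪y, x⟫ = ⟪x, y⟫ := real_inner_comm x y
  simp only [hF] at hslope
  simp only [ContinuousLinearMap.sub_apply, ContinuousLinearMap.smul_apply, innerSL_apply_apply,
    smul_eq_mul] at hslope
  rw [hcomm] at hnorm
  rw [hip] at hslope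
  rw [hnorm]
  linarith

lemma grad_monotone'
    {E : Type*} [NormedAddCommGroup E] [InnerProductSpace ℝ E]
    (lam : ℝ) (f : E → ℝ) (g : E → E)
    (hub : ∀ x y : E, f y ≤ f x + ⟪g x, y - x⟫ + lam / 2 * ‖y - x‖ ^ 2)
    (x y : E) : ⟪g y - g x, y - x⟫ ≤ lam * ‖y - x‖ ^ 2 := by
  have h1 := hub x y
  have h2 := hub y x
  have e1 : ⟪g y, x - y⟫ = -⟪g y, y - x⟫ := by
    rw [← inner_neg_right]; congr 1; abel
  have e2 : ‖x - y‖ = ‖y - x‖ := norm_sub_rev x y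
  rw [e1, e2] at h2
  rw [inner_sub_left]
  linarith

section aux1

variable {E : Type*} [NormedAddCommGroup E] [InnerProductSpace ℝ E]

-- contraction along the gradient flow
lemma flow_contraction
    (lam : ℝ) (g : E → E) (T : ℝ) (α : ℝ → E)
    (hmono : ∀ x y : E, ⟪g y - g x, y - x⟫ ≤ lam * ‖y - x‖ ^ 2)
    (hαc : ContinuousOn α (Set.Ico 0 T))
    (hαd : ∀ u ∈ Set.Ioo (0:ℝ) T, HasDerivAt α (g (α u)) u)
    (h : ℝ) (hh : 0 < h) (a b : ℝ) (ha : 0 ≤ a) (hab : a ≤ b) (hbT : b + h < T) :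
    ‖α (b + h) - α b‖ ≤ Real.exp (lam * (b - a)) * ‖α (a + h) - α a‖ := by
  set r : ℝ → ℝ := fun u => Real.exp (-(2*lam)*u) * ‖α (u+h) - α u‖^2 with hr
  have hsub1 : Set.Icc a b ⊆ Set.Ico 0 T := fun u hu =>
    ⟨ha.trans hu.1, lt_of_le_of_lt (hu.2.trans (le_add_of_nonneg_right hh.le)) hbT⟩
  have hsub2 : ∀ u ∈ Set.Icc a b, u + h ∈ Set.Ico 0 T := fun u hu =>
    ⟨le_trans (ha.trans hu.1) (le_add_of_nonneg_right hh.le),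
      lt_of_le_of_lt (by linarith [hu.2]) hbT⟩
  have hrcont : ContinuousOn r (Set.Icc a b) := by
    apply ContinuousOn.mul
    · exact (Real.continuous_exp.comp (continuous_const.mul continuous_id)).continuousOn
    · have h1 : ContinuousOn (fun u => α (u + h)) (Set.Icc a b) :=
        hαc.comp (continuous_id.add continuous_const).continuousOn hsub2
      exact ((h1.sub (hαc.mono hsub1)).norm).pow 2
  have hrderiv : ∀ u ∈ Set.Ioo a b,
      HasDerivAt r ((-(2*lam) * Real.exp (-(2*lam)*u)) * ‖α (u+h) - α u‖^2
        + Real.exp (-(2*lam)*u) *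
          (2 * ⟪α (u+h) - α u, g (α (u+h)) - g (α u)⟫)) u := by
    intro u hu
    have huI : u ∈ Set.Ioo (0:ℝ) T :=
      ⟨lt_of_le_of_lt ha hu.1, by linarith [hu.2, hh]⟩
    have huhI : u + h ∈ Set.Ioo (0:ℝ) T := ⟨by linarith [huI.1], by linarith [hu.2]⟩
    have hd1 : HasDerivAt (fun w => α (w + h)) (g (α (u + h))) u :=
      HasDerivAt.comp_add_const u h (hαd (u+h) huhI)
    have hd : HasDerivAt (fun w => α (w + h) - α w) (g (α (u+h)) - g (α u)) u :=
      hd1.sub (hαd u huI)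
    have hq : HasDerivAt (fun w => ‖α (w + h) - α w‖^2)
        (2 * ⟪α (u+h) - α u, g (α (u+h)) - g (α u)⟫) u := hd.norm_sq
    have he : HasDerivAt (fun w => Real.exp (-(2*lam)*w))
        (Real.exp (-(2*lam)*u) * (-(2*lam))) u := by
      simpa using ((hasDerivAt_id u).const_mul (-(2*lam))).exp
    have := he.mul hq
    rw [hr]
    exact this.congr_deriv (by ring)
  have hrd : AntitoneOn r (Set.Icc a b) := by
    apply antitoneOn_of_deriv_nonpos (convex_Icc a b) hrcont
    · intro u hu
      rw [interior_Icc] at hu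
      exact ((hrderiv u hu).differentiableAt).differentiableWithinAt
    · intro u hu
      rw [interior_Icc] at hu
      rw [(hrderiv u hu).deriv]
      have hkey : ⟪α (u+h) - α u, g (α (u+h)) - g (α u)⟫ ≤ lam * ‖α (u+h) - α u‖^2 := by
        have := hmono (α u) (α (u+h))
        rwa [real_inner_comm]
      have hexp : (0:ℝ) < Real.exp (-(2*lam)*u) := Real.exp_pos _
      nlinarith [hexp, hkey]
  have h1 := hrd (Set.left_mem_Icc.2 hab) (Set.right_mem_Icc.2 hab) hab
  -- r b ≤ r a
  rw [hr] at h1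
  simp only at h1
  have hepos : (0:ℝ) < Real.exp (lam * (b - a)) := Real.exp_pos _
  apply le_of_pow_le_pow_left₀ (two_ne_zero) (by positivity) (n := 2)
  rw [mul_pow]
  have hexp2 : Real.exp (lam * (b-a)) ^ 2 = Real.exp (2*lam*b) * Real.exp (-(2*lam)*a) := by
    rw [sq, ← Real.exp_add, ← Real.exp_add]; ring_nf
  rw [hexp2]
  have hb2 : Real.exp (-(2*lam)*b) * ‖α (b + h) - α b‖ ^ 2 ≤
      Real.exp (-(2*lam)*a) * ‖α (a + h) - α a‖ ^ 2 := h1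
  have : Real.exp (2*lam*b) * Real.exp (-(2*lam)*b) = 1 := by
    rw [← Real.exp_add]; ring_nf; exact Real.exp_zero
  calc ‖α (b + h) - α b‖ ^ 2
      = Real.exp (2*lam*b) * (Real.exp (-(2*lam)*b) * ‖α (b + h) - α b‖ ^ 2) := by
        rw [← mul_assoc, this, one_mul]
    _ ≤ Real.exp (2*lam*b) * (Real.exp (-(2*lam)*a) * ‖α (a + h) - α a‖ ^ 2) := by
        apply mul_le_mul_of_nonneg_left hb2 (Real.exp_pos _).le
    _ = Real.exp (2*lam*b) * Real.exp (-(2*lam)*a) * ‖α (a + h) - α a‖ ^ 2 := by ring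

end aux1

section aux2

variable {E : Type*} [NormedAddCommGroup E] [InnerProductSpace ℝ E]

lemma norm_slope_tendsto
    (g : E → E) (T : ℝ) (α : ℝ → E)
    (hα : ∀ t ∈ Set.Ico (0 : ℝ) T, HasDerivWithinAt α (g (α t)) (Set.Ico 0 T) t)
    (b : ℝ) (hb : b ∈ Set.Ico (0:ℝ) T) :
    Tendsto (fun h : ℝ => ‖slope α b (b + h)‖) (𝓝[>] (0:ℝ)) (𝓝 ‖g (α b)‖) := by
  have hslope : Tendsto (slope α b) (𝓝[Set.Ico 0 T \ {b}] b) (𝓝 (g (α b))) :=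
    hasDerivWithinAt_iff_tendsto_slope.1 (hα b hb)
  have hcomp : Tendsto (fun h : ℝ => b + h) (𝓝[>] (0:ℝ)) (𝓝[Set.Ico 0 T \ {b}] b) := by
    rw [tendsto_nhdsWithin_iff]
    constructor
    · have : Tendsto (fun h : ℝ => b + h) (𝓝 (0:ℝ)) (𝓝 b) := by
        simpa using (tendsto_const_nhds.add tendsto_id : Tendsto (fun h : ℝ => b + h) (𝓝 0) (𝓝 (b + 0)))
      exact this.mono_left nhdsWithin_le_nhds
    · filter_upwards [Ioo_mem_nhdsGT_of_mem (⟨le_refl (0:ℝ), sub_pos.2 hb.2⟩ : (0:ℝ) ∈ Set.Ico 0 (T - b))] with h hh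
      exact ⟨⟨le_trans hb.1 (by linarith [hh.1]), by linarith [hh.2]⟩, by
        simp only [Set.mem_singleton_iff]; intro hc; linarith [hh.1, hc]⟩
  exact (hslope.comp hcomp).norm

end aux2

section aux3

variable {E : Type*} [NormedAddCommGroup E] [InnerProductSpace ℝ E]

lemma norm_grad_exp_le
    (lam : ℝ) (g : E → E) (T : ℝ) (α : ℝ → E)
    (hα : ∀ t ∈ Set.Ico (0 : ℝ) T, HasDerivWithinAt α (g (α t)) (Set.Ico 0 T) t)
    (hcontr : ∀ h : ℝ, 0 < h → ∀ a b : ℝ, 0 ≤ a → a ≤ b → b + h < T →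
      ‖α (b + h) - α b‖ ≤ Real.exp (lam * (b - a)) * ‖α (a + h) - α a‖)
    (hslopeT : ∀ b ∈ Set.Ico (0:ℝ) T,
      Tendsto (fun h : ℝ => ‖slope α b (b + h)‖) (𝓝[>] (0:ℝ)) (𝓝 ‖g (α b)‖))
    (a b : ℝ) (ha : 0 ≤ a) (hab : a ≤ b) (hbT : b < T) :
    ‖g (α b)‖ ≤ Real.exp (lam * (b - a)) * ‖g (α a)‖ := by
  have hbI : b ∈ Set.Ico 0 T := ⟨ha.trans hab, hbT⟩
  have haI : a ∈ Set.Ico 0 T := ⟨ha, lt_of_le_of_lt hab hbT⟩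
  have tA := hslopeT b hbI
  have tB := (hslopeT a haI).const_mul (Real.exp (lam*(b-a)))
  refine le_of_tendsto_of_tendsto tA tB ?_
  filter_upwards [Ioo_mem_nhdsGT_of_mem
    (⟨le_refl (0:ℝ), sub_pos.2 hbT⟩ : (0:ℝ) ∈ Set.Ico 0 (T - b))] with h hh
  have h0 : 0 < h := hh.1
  have hbh : b + h < T := by linarith [hh.2]
  have hk := hcontr h h0 a b ha hab hbh
  have e1 : ‖slope α b (b+h)‖ = h⁻¹ * ‖α (b+h) - α b‖ := by
    rw [slope_def_module, add_sub_cancel_left, norm_smul, Real.norm_eq_abs, abs_inv,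
      abs_of_pos h0]
  have e2 : ‖slope α a (a+h)‖ = h⁻¹ * ‖α (a+h) - α a‖ := by
    rw [slope_def_module, add_sub_cancel_left, norm_smul, Real.norm_eq_abs, abs_inv,
      abs_of_pos h0]
  show ‖slope α b (b+h)‖ ≤ Real.exp (lam*(b-a)) * ‖slope α a (a+h)‖
  rw [e1, e2]
  calc h⁻¹ * ‖α (b+h) - α b‖
      ≤ h⁻¹ * (Real.exp (lam*(b-a)) * ‖α (a+h) - α a‖) :=
        mul_le_mul_of_nonneg_left hk (by positivity)
    _ = Real.exp (lam*(b-a)) * (h⁻¹ * ‖α (a+h) - α a‖) := by ring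

lemma m_antitone
    (lam : ℝ) (g : E → E) (T : ℝ) (α : ℝ → E) (s : ℝ → ℝ)
    (hsd : ∀ u ∈ Set.Ioo (0:ℝ) T, HasDerivAt s ‖g (α u)‖ u)
    (hscont : ∀ b, 0 ≤ b → b < T → ContinuousOn s (Set.Icc 0 b))
    (hexp : ∀ a b : ℝ, 0 ≤ a → a ≤ b → b < T →
      ‖g (α b)‖ ≤ Real.exp (lam * (b - a)) * ‖g (α a)‖)
    (a b : ℝ) (ha : 0 ≤ a) (hab : a ≤ b) (hbT : b < T) :
    ‖g (α b)‖ - lam * s b ≤ ‖g (α a)‖ - lam * s a := by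
  have hIccsub : Set.Icc a b ⊆ Set.Icc 0 b := fun u hu => ⟨ha.trans hu.1, hu.2⟩
  have hb0 : 0 ≤ b := ha.trans hab
  have hsc : ContinuousOn s (Set.Icc a b) := (hscont b hb0 hbT).mono hIccsub
  have hintmem : ∀ u ∈ Set.Ioo a b, u ∈ Set.Ioo (0:ℝ) T := fun u hu =>
    ⟨lt_of_le_of_lt ha hu.1, lt_trans hu.2 hbT⟩
  rcases lt_trichotomy lam 0 with hl | hl | hl
  · -- lam < 0
    set D : ℝ → ℝ := fun t => lam * s t - ‖g (α a)‖ * Real.exp (lam * (t - a)) with hD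
    have hDd : ∀ u ∈ Set.Ioo a b, HasDerivAt D
        (lam * ‖g (α u)‖ - ‖g (α a)‖ * (Real.exp (lam * (u - a)) * lam)) u := by
      intro u hu
      have := ((hsd u (hintmem u hu)).const_mul lam).sub
        ((((hasDerivAt_id u).sub_const a).const_mul lam).exp.const_mul ‖g (α a)‖)
      exact this.congr_deriv (by simp)
    have hmonoD : MonotoneOn D (Set.Icc a b) := by
      apply monotoneOn_of_deriv_nonneg (convex_Icc a b)
      · apply ContinuousOn.sub (continuousOn_const.mul hsc)
        exact continuousOn_const.mul (Real.continuous_exp.comp (by continuity)).continuousOn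
      · intro u hu
        rw [interior_Icc] at hu
        exact ((hDd u hu).differentiableAt).differentiableWithinAt
      · intro u hu
        rw [interior_Icc] at hu
        rw [(hDd u hu).deriv]
        have hu0 : 0 ≤ u := le_trans ha hu.1.le
        have huu := hexp a u ha hu.1.le (lt_trans hu.2 hbT)
        -- lam < 0 : need lam * ‖g(α u)‖ ≥ lam * (‖g(α a)‖ exp(lam(u-a)))
        nlinarith [huu, Real.exp_pos (lam * (u - a))]
    have hab' := hmonoD (Set.left_mem_Icc.2 hab) (Set.right_mem_Icc.2 hab) hab
    rw [hD] at hab'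
    simp only at hab'
    have hba := hexp a b ha hab hbT
    have : Real.exp (lam * (a - a)) = 1 := by rw [show lam * (a-a) = 0 by ring, Real.exp_zero]
    rw [this] at hab'
    -- hab' : lam * s a - ‖g(α a)‖ ≤ lam * s b - ‖g(α a)‖ * exp(lam(b-a))
    nlinarith [hba]
  · -- lam = 0
    subst hl
    have := hexp a b ha hab hbT
    simpa using this
  · -- lam > 0
    set D : ℝ → ℝ := fun t => lam * s t - ‖g (α b)‖ * Real.exp (lam * (t - b)) with hD
    have hDd : ∀ u ∈ Set.Ioo a b, HasDerivAt D
        (lam * ‖g (α u)‖ - ‖g (α b)‖ * (Real.exp (lam * (u - b)) * lam)) u := by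
      intro u hu
      have := ((hsd u (hintmem u hu)).const_mul lam).sub
        ((((hasDerivAt_id u).sub_const b).const_mul lam).exp.const_mul ‖g (α b)‖)
      exact this.congr_deriv (by simp)
    have hmonoD : MonotoneOn D (Set.Icc a b) := by
      apply monotoneOn_of_deriv_nonneg (convex_Icc a b)
      · apply ContinuousOn.sub (continuousOn_const.mul hsc)
        exact continuousOn_const.mul (Real.continuous_exp.comp (by continuity)).continuousOn
      · intro u hu
        rw [interior_Icc] at hu
        exact ((hDd u hu).differentiableAt).differentiableWithinAt
      · intro u hu
        rw [interior_Icc] at hu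
        rw [(hDd u hu).deriv]
        have hu0 : 0 ≤ u := le_trans ha hu.1.le
        have huu := hexp u b hu0 hu.2.le hbT
        have hee : Real.exp (lam * (b - u)) * Real.exp (lam * (u - b)) = 1 := by
          rw [← Real.exp_add, show lam*(b-u) + lam*(u-b) = 0 by ring, Real.exp_zero]
        have h1 : ‖g (α b)‖ * Real.exp (lam*(u-b)) ≤ ‖g (α u)‖ := by
          have hm := mul_le_mul_of_nonneg_right huu (Real.exp_pos (lam*(u-b))).le
          calc ‖g (α b)‖ * Real.exp (lam*(u-b))
              ≤ Real.exp (lam*(b-u)) * ‖g (α u)‖ * Real.exp (lam*(u-b)) := hm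
            _ = (Real.exp (lam*(b-u)) * Real.exp (lam*(u-b))) * ‖g (α u)‖ := by ring
            _ = ‖g (α u)‖ := by rw [hee, one_mul]
        nlinarith [h1, hl.le]
    have hab' := hmonoD (Set.left_mem_Icc.2 hab) (Set.right_mem_Icc.2 hab) hab
    rw [hD] at hab'
    simp only at hab'
    have : Real.exp (lam * (b - b)) = 1 := by rw [show lam * (b-b) = 0 by ring, Real.exp_zero]
    rw [this] at hab'
    have hba := hexp a b ha hab hbT
    have hee : Real.exp (lam * (b - a)) * Real.exp (lam * (a - b)) = 1 := by
      rw [← Real.exp_add, show lam*(b-a) + lam*(a-b) = 0 by ring, Real.exp_zero]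
    have h2 : ‖g (α b)‖ * Real.exp (lam*(a-b)) ≤ ‖g (α a)‖ := by
      have hm := mul_le_mul_of_nonneg_right hba (Real.exp_pos (lam*(a-b))).le
      calc ‖g (α b)‖ * Real.exp (lam*(a-b))
          ≤ Real.exp (lam*(b-a)) * ‖g (α a)‖ * Real.exp (lam*(a-b)) := hm
        _ = (Real.exp (lam*(b-a)) * Real.exp (lam*(a-b))) * ‖g (α a)‖ := by ring
        _ = ‖g (α a)‖ := by rw [hee, one_mul]
    linarith [hab', h2]

end aux3

section aux4

variable {E : Type*} [NormedAddCommGroup E] [InnerProductSpace ℝ E]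

lemma concave_aux
    (lam : ℝ) (f : E → ℝ) (g : E → E)
    (hg : ∀ x, HasFDerivAt f (innerSL ℝ (g x)) x) (hgc : Continuous g)
    (T : ℝ) (α : ℝ → E)
    (hα : ∀ t ∈ Set.Ico (0 : ℝ) T, HasDerivWithinAt α (g (α t)) (Set.Ico 0 T) t)
    (hne : ∀ t ∈ Set.Ico (0 : ℝ) T, g (α t) ≠ 0)
    (s : ℝ → ℝ) (hs : ∀ t, s t = ∫ u in (0 : ℝ)..t, ‖g (α u)‖)
    (hub : ∀ x y : E, f y ≤ f x + ⟪g x, y - x⟫ + lam / 2 * ‖y - x‖ ^ 2) :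
    ∀ t₀ t₁ t₂ : ℝ, 0 ≤ t₀ → t₀ < t₁ → t₁ < t₂ → t₂ < T →
      f (α t₁) - lam / 2 * (s t₁) ^ 2 ≥
        ((s t₂ - s t₁) * (f (α t₀) - lam / 2 * (s t₀) ^ 2)
          + (s t₁ - s t₀) * (f (α t₂) - lam / 2 * (s t₂) ^ 2)) / (s t₂ - s t₀) := by
  intro t₀ t₁ t₂ ht₀ h01 h12 h2T
  have h1T : t₁ < T := lt_trans h12 h2T
  have ht₁0 : 0 ≤ t₁ := le_trans ht₀ h01.le
  have h02 : (0:ℝ) ≤ t₂ := le_trans ht₁0 h12.le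
  have hαc : ContinuousOn α (Set.Ico 0 T) := fun t ht => (hα t ht).continuousWithinAt
  have hnc : ContinuousOn (fun t => ‖g (α t)‖) (Set.Ico 0 T) :=
    (hgc.comp_continuousOn hαc).norm
  have hαd : ∀ u ∈ Set.Ioo (0:ℝ) T, HasDerivAt α (g (α u)) u := fun u hu =>
    (hα u ⟨hu.1.le, hu.2⟩).hasDerivAt (Ico_mem_nhds hu.1 hu.2)
  have hseq : s = fun t => ∫ v in (0:ℝ)..t, ‖g (α v)‖ := funext hs
  have hsd : ∀ u ∈ Set.Ioo (0:ℝ) T, HasDerivAt s ‖g (α u)‖ u := by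
    intro u hu
    have hint : IntervalIntegrable (fun t => ‖g (α t)‖) volume 0 u := by
      apply ContinuousOn.intervalIntegrable
      apply hnc.mono
      rw [Set.uIcc_of_le hu.1.le]
      exact fun z hz => ⟨hz.1, lt_of_le_of_lt hz.2 hu.2⟩
    have hmeas : StronglyMeasurableAtFilter (fun t => ‖g (α t)‖) (𝓝 u) volume :=
      ⟨Set.Ioo 0 T, Ioo_mem_nhds hu.1 hu.2,
        (hnc.mono Set.Ioo_subset_Ico_self).aestronglyMeasurable measurableSet_Ioo⟩
    have hca : ContinuousAt (fun t => ‖g (α t)‖) u :=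
      hnc.continuousAt (Ico_mem_nhds hu.1 hu.2)
    rw [hseq]
    exact intervalIntegral.integral_hasDerivAt_right hint hmeas hca
  have hscont : ∀ b, 0 ≤ b → b < T → ContinuousOn s (Set.Icc 0 b) := by
    intro b hb0 hbT
    have hint : IntegrableOn (fun t => ‖g (α t)‖) (Set.uIcc 0 b) volume := by
      rw [Set.uIcc_of_le hb0]
      exact (hnc.mono (fun z hz => ⟨hz.1, lt_of_le_of_lt hz.2 hbT⟩)).integrableOn_Icc
    have := intervalIntegral.continuousOn_primitive_interval hint
    rw [Set.uIcc_of_le hb0] at this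
    rw [hseq]; exact this
  have hfc : Continuous f := continuous_iff_continuousAt.2 fun x => (hg x).continuousAt
  have hmono := grad_monotone' lam f g hub
  have hcontr := flow_contraction lam g T α hmono hαc hαd
  have hslopeT := norm_slope_tendsto g T α hα
  have hexp := norm_grad_exp_le lam g T α hα hcontr hslopeT
  have hm := m_antitone lam g T α s hsd hscont hexp
  have hφd : ∀ u ∈ Set.Ioo (0:ℝ) T, HasDerivAt (fun t => f (α t)) (‖g (α u)‖^2) u := by
    intro u hu
    have := (hg (α u)).comp_hasDerivAt u (hαd u hu)
    exact this.congr_deriv (by simp [real_inner_self_eq_norm_sq])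
  have hssm : StrictMonoOn s (Set.Icc 0 t₂) := by
    apply strictMonoOn_of_deriv_pos (convex_Icc 0 t₂) (hscont t₂ h02 h2T)
    intro u hu
    rw [interior_Icc] at hu
    have huI : u ∈ Set.Ioo (0:ℝ) T := ⟨hu.1, lt_trans hu.2 h2T⟩
    rw [(hsd u huI).deriv]
    exact norm_pos_iff.2 (hne u ⟨hu.1.le, huI.2⟩)
  have hmem0 : t₀ ∈ Set.Icc 0 t₂ := ⟨ht₀, (h01.trans h12).le⟩
  have hmem1 : t₁ ∈ Set.Icc 0 t₂ := ⟨ht₁0, h12.le⟩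
  have hmem2 : t₂ ∈ Set.Icc 0 t₂ := ⟨h02, le_refl _⟩
  have hs01 : s t₀ < s t₁ := hssm hmem0 hmem1 h01
  have hs12 : s t₁ < s t₂ := hssm hmem1 hmem2 h12
  set m₁ : ℝ := ‖g (α t₁)‖ - lam * s t₁ with hm₁
  set G : ℝ → ℝ := fun t => f (α t) - lam / 2 * (s t)^2 - m₁ * s t with hG
  have hGd : ∀ u ∈ Set.Ioo (0:ℝ) T, HasDerivAt G
      (‖g (α u)‖^2 - lam / 2 * (2 * s u * ‖g (α u)‖) - m₁ * ‖g (α u)‖) u := by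
    intro u hu
    have h1 := hφd u hu
    have h2 : HasDerivAt (fun t => lam / 2 * (s t)^2)
        (lam / 2 * (2 * s u * ‖g (α u)‖)) u := by
      have := ((hsd u hu).pow 2).const_mul (lam / 2)
      exact this.congr_deriv (by push_cast; ring)
    have h3 : HasDerivAt (fun t => m₁ * s t) (m₁ * ‖g (α u)‖) u := (hsd u hu).const_mul m₁
    exact (h1.sub h2).sub h3
  have hGc : ∀ a b : ℝ, 0 ≤ a → a ≤ b → b < T → ContinuousOn G (Set.Icc a b) := by
    intro a b ha0 hab hbT
    have hsub : Set.Icc a b ⊆ Set.Icc 0 b := fun u hu => ⟨ha0.trans hu.1, hu.2⟩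
    have hsub2 : Set.Icc a b ⊆ Set.Ico 0 T := fun u hu =>
      ⟨ha0.trans hu.1, lt_of_le_of_lt hu.2 hbT⟩
    have hscb := (hscont b (ha0.trans hab) hbT).mono hsub
    exact ((hfc.comp_continuousOn (hαc.mono hsub2)).sub
      (continuousOn_const.mul (hscb.pow 2))).sub (continuousOn_const.mul hscb)
  have hmono1 : MonotoneOn G (Set.Icc t₀ t₁) := by
    apply monotoneOn_of_deriv_nonneg (convex_Icc _ _) (hGc t₀ t₁ ht₀ h01.le h1T)
    · intro u hu
      rw [interior_Icc] at hu
      have huI : u ∈ Set.Ioo (0:ℝ) T := ⟨lt_of_le_of_lt ht₀ hu.1, lt_trans hu.2 h1T⟩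
      exact (hGd u huI).differentiableAt.differentiableWithinAt
    · intro u hu
      rw [interior_Icc] at hu
      have huI : u ∈ Set.Ioo (0:ℝ) T := ⟨lt_of_le_of_lt ht₀ hu.1, lt_trans hu.2 h1T⟩
      rw [(hGd u huI).deriv]
      have hmu : m₁ ≤ ‖g (α u)‖ - lam * s u := hm u t₁ huI.1.le hu.2.le h1T
      nlinarith [hmu, norm_nonneg (g (α u))]
  have hanti1 : AntitoneOn G (Set.Icc t₁ t₂) := by
    apply antitoneOn_of_deriv_nonpos (convex_Icc _ _) (hGc t₁ t₂ ht₁0 h12.le h2T)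
    · intro u hu
      rw [interior_Icc] at hu
      have huI : u ∈ Set.Ioo (0:ℝ) T :=
        ⟨lt_of_le_of_lt ht₁0 hu.1, lt_trans hu.2 h2T⟩
      exact (hGd u huI).differentiableAt.differentiableWithinAt
    · intro u hu
      rw [interior_Icc] at hu
      have huI : u ∈ Set.Ioo (0:ℝ) T :=
        ⟨lt_of_le_of_lt ht₁0 hu.1, lt_trans hu.2 h2T⟩
      rw [(hGd u huI).deriv]
      have hmu : ‖g (α u)‖ - lam * s u ≤ m₁ := hm t₁ u ht₁0 hu.1.le huI.2
      nlinarith [hmu, norm_nonneg (g (α u))]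
  have hG1 : G t₀ ≤ G t₁ :=
    hmono1 ⟨le_refl _, h01.le⟩ ⟨h01.le, le_refl _⟩ h01.le
  have hG2 : G t₂ ≤ G t₁ :=
    hanti1 ⟨le_refl _, h12.le⟩ ⟨h12.le, le_refl _⟩ h12.le
  have e1 : m₁ * (s t₁ - s t₀) ≤
      (f (α t₁) - lam/2*(s t₁)^2) - (f (α t₀) - lam/2*(s t₀)^2) := by
    have := hG1
    simp only [hG] at this
    linarith
  have e2 : (f (α t₂) - lam/2*(s t₂)^2) - (f (α t₁) - lam/2*(s t₁)^2) ≤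
      m₁ * (s t₂ - s t₁) := by
    have := hG2
    simp only [hG] at this
    linarith
  rw [ge_iff_le, div_le_iff₀ (by linarith : (0:ℝ) < s t₂ - s t₀)]
  nlinarith [mul_le_mul_of_nonneg_left e1 (by linarith : (0:ℝ) ≤ s t₂ - s t₁),
             mul_le_mul_of_nonneg_left e2 (by linarith : (0:ℝ) ≤ s t₁ - s t₀)]

end aux4
/-- λ-concavity of `f` along the arclength reparametrization of an `f`-gradient curve
(linear model of Lemma 2.2). -/
theorem concave_along_arclength_reparam
    {E : Type*} [NormedAddCommGroup E] [InnerProductSpace ℝ E]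
    (lam : ℝ) (f : E → ℝ) (g : E → E)
    (hconc : ConcaveOn ℝ Set.univ (fun x => f x - lam / 2 * ‖x‖ ^ 2))
    (hg : ∀ x, HasFDerivAt f (innerSL ℝ (g x)) x) (hgc : Continuous g)
    (T : ℝ) (α : ℝ → E)
    (hα : ∀ t ∈ Set.Ico (0 : ℝ) T, HasDerivWithinAt α (g (α t)) (Set.Ico 0 T) t)
    (hne : ∀ t ∈ Set.Ico (0 : ℝ) T, g (α t) ≠ 0)
    (s : ℝ → ℝ) (hs : ∀ t, s t = ∫ u in (0 : ℝ)..t, ‖g (α u)‖) :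
    ∀ t₀ t₁ t₂ : ℝ, 0 ≤ t₀ → t₀ < t₁ → t₁ < t₂ → t₂ < T →
      f (α t₁) - lam / 2 * (s t₁) ^ 2 ≥
        ((s t₂ - s t₁) * (f (α t₀) - lam / 2 * (s t₀) ^ 2)
          + (s t₁ - s t₀) * (f (α t₂) - lam / 2 * (s t₂) ^ 2)) / (s t₂ - s t₀) := by
  exact concave_aux lam f g hg hgc T α hα hne s hs
    (grad_upper_bound lam f g hconc hg)
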